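/- Let z, z̄ : [0,1] → ℝ^d satisfy z' = σ(Az + b), z̄' = σ((A+Δ)z̄ + b) with z(0) = z̄(0), where σ : ℝ → ℝ is differentiable with σ' ∈ [α, 1], 0 < α ≤ 1, applied entrywise. Let δ = max over diagonal D with entries in [α,1] of μ₂(D(A+Δ)), assume δ ≠ 0, and let M = max_{t∈[0,1]} ‖z(t)‖₂. Then ‖z(1) − z̄(1)‖₂ ≤ M·σ_max(Δ)·(e^δ − 1)/δ. -/

import Mathlib

open Matrix

noncomputable def norm2 {n : ℕ} (v : Fin n → ℝ) : ℝ := Real.sqrt (∑ i, v i ^ 2)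

def inner2 {n : ℕ} (u v : Fin n → ℝ) : ℝ := ∑ i, u i * v i

noncomputable def specNorm {m n : ℕ} (A : Matrix (Fin m) (Fin n) ℝ) : ℝ :=
  ‖LinearMap.toContinuousLinearMap (Matrix.toEuclideanLin A)‖

theorem symPart_isHermitian {n : ℕ} (A : Matrix (Fin n) (Fin n) ℝ) :
    (((1:ℝ)/2) • (A + Aᵀ)).IsHermitian := by
  unfold Matrix.IsHermitian
  ext i j
  simp [Matrix.conjTranspose_apply, Matrix.transpose_apply]
  ring

/-- The logarithmic 2-norm: largest eigenvalue of the symmetric part (A + Aᵀ)/2. -/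
noncomputable def mu2 {n : ℕ} (A : Matrix (Fin n) (Fin n) ℝ) : ℝ :=
  ⨆ i, (symPart_isHermitian A).eigenvalues i

/-- The singular values of A: square roots of the eigenvalues of AᵀA. -/
noncomputable def singVals {m n : ℕ} (A : Matrix (Fin m) (Fin n) ℝ) : Fin n → ℝ :=
  fun i => Real.sqrt ((show (Aᵀ * A).IsHermitian by
    simpa [Matrix.conjTranspose_eq_transpose_of_trivial] using Matrix.isHermitian_conjTranspose_mul_self A).eigenvalues i)

/-! ### Auxiliary lemmas -/

lemma eigLin {n : ℕ} {S : Matrix (Fin n) (Fin n) ℝ} (hS : S.IsHermitian) (i : Fin n) :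
    Matrix.toEuclideanLin S (hS.eigenvectorBasis i) = hS.eigenvalues i • (hS.eigenvectorBasis i) := by
  have h := hS.mulVec_eigenvectorBasis i
  rw [Matrix.toEuclideanLin_apply]
  ext j
  have := congrFun h j
  simpa using this

lemma rayleigh_le {n : ℕ} {S : Matrix (Fin n) (Fin n) ℝ} (hS : S.IsHermitian) {c : ℝ}
    (hc : ∀ i, hS.eigenvalues i ≤ c) (x : EuclideanSpace ℝ (Fin n)) :
    (inner ℝ x (Matrix.toEuclideanLin S x) : ℝ) ≤ c * (inner ℝ x x : ℝ) := by
  set b := hS.eigenvectorBasis with hb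
  have hsymm : (Matrix.toEuclideanLin S).IsSymmetric :=
    Matrix.isHermitian_iff_isSymmetric.mp hS
  have hrepr : ∀ i, b.repr (Matrix.toEuclideanLin S x) i = hS.eigenvalues i * b.repr x i := by
    intro i
    rw [b.repr_apply_apply, b.repr_apply_apply, ← hsymm (b i) x, eigLin hS i]
    simp [real_inner_smul_left, PiLp.inner_apply, RCLike.inner_apply, Finset.mul_sum, hb, mul_assoc]
    exact Finset.sum_congr rfl fun j _ => by ring
  have h1 : (inner ℝ x (Matrix.toEuclideanLin S x) : ℝ)
      = ∑ i, hS.eigenvalues i * (b.repr x i)^2 := by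
    rw [← b.repr.inner_map_map x (Matrix.toEuclideanLin S x)]
    rw [PiLp.inner_apply]
    refine Finset.sum_congr rfl fun i _ => ?_
    rw [hrepr i]
    simp [RCLike.inner_apply]
    ring
  have h2 : (inner ℝ x x : ℝ) = ∑ i, (b.repr x i)^2 := by
    rw [← b.repr.inner_map_map x x, PiLp.inner_apply]
    refine Finset.sum_congr rfl fun i _ => ?_
    simp [RCLike.inner_apply]
  rw [h1, h2, Finset.mul_sum]
  exact Finset.sum_le_sum fun i _ => mul_le_mul_of_nonneg_right (hc i) (sq_nonneg _)

lemma inner_eq_dot {n : ℕ} (x y : EuclideanSpace ℝ (Fin n)) :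
    (inner ℝ x y : ℝ) = (x : Fin n → ℝ) ⬝ᵥ (y : Fin n → ℝ) := by
  rw [PiLp.inner_apply]; simp [dotProduct, RCLike.inner_apply, mul_comm]

lemma dot_transpose_mulVec {n : ℕ} (A : Matrix (Fin n) (Fin n) ℝ) (x y : Fin n → ℝ) :
    x ⬝ᵥ (Aᵀ *ᵥ y) = (A *ᵥ x) ⬝ᵥ y := by
  rw [Matrix.dotProduct_mulVec, Matrix.vecMul_transpose, dotProduct_comm,
    Matrix.dotProduct_mulVec]

lemma rayleigh_dot {n : ℕ} {S : Matrix (Fin n) (Fin n) ℝ} (hS : S.IsHermitian) {c : ℝ}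
    (hc : ∀ i, hS.eigenvalues i ≤ c) (x : Fin n → ℝ) :
    x ⬝ᵥ (S *ᵥ x) ≤ c * (x ⬝ᵥ x) := by
  have := rayleigh_le hS hc ((WithLp.equiv 2 _).symm x)
  rwa [inner_eq_dot, inner_eq_dot, Matrix.toEuclideanLin_apply] at this

lemma dot_mu2_le {n : ℕ} [Nonempty (Fin n)] (B : Matrix (Fin n) (Fin n) ℝ) (x : Fin n → ℝ) :
    x ⬝ᵥ (B *ᵥ x) ≤ mu2 B * (x ⬝ᵥ x) := by
  have h1 : x ⬝ᵥ (B *ᵥ x) = x ⬝ᵥ ((((1:ℝ)/2) • (B + Bᵀ)) *ᵥ x) := by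
    rw [Matrix.smul_mulVec, Matrix.add_mulVec, dotProduct_smul,
      dotProduct_add, dot_transpose_mulVec, dotProduct_comm (B *ᵥ x)]
    simp; ring
  rw [h1]
  exact rayleigh_dot (symPart_isHermitian B)
    (fun i => le_ciSup (Set.Finite.bddAbove (Set.finite_range _)) i) x

lemma singVals_nonneg {m n : ℕ} (A : Matrix (Fin m) (Fin n) ℝ) (i : Fin n) : 0 ≤ singVals A i :=
  Real.sqrt_nonneg _

lemma dot_sing_le {n : ℕ} [Nonempty (Fin n)] (A : Matrix (Fin n) (Fin n) ℝ) (x : Fin n → ℝ) :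
    (A *ᵥ x) ⬝ᵥ (A *ᵥ x) ≤ (⨆ i, singVals A i)^2 * (x ⬝ᵥ x) := by
  set s := ⨆ i, singVals A i with hs
  have hs0 : 0 ≤ s := le_trans (singVals_nonneg A (Classical.arbitrary _))
    (le_ciSup (Set.Finite.bddAbove (Set.finite_range _)) _)
  have hposd : (Aᵀ * A).PosSemidef := by
    have := Matrix.posSemidef_conjTranspose_mul_self A
    simpa using this
  have h1 : (A *ᵥ x) ⬝ᵥ (A *ᵥ x) = x ⬝ᵥ ((Aᵀ * A) *ᵥ x) := by
    rw [← Matrix.mulVec_mulVec, dot_transpose_mulVec]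
  rw [h1]
  refine rayleigh_dot (show (Aᵀ * A).IsHermitian by simpa [Matrix.conjTranspose_eq_transpose_of_trivial] using Matrix.isHermitian_conjTranspose_mul_self A) (fun i => ?_) x
  have hnn := hposd.eigenvalues_nonneg i
  have h2 : (show (Aᵀ * A).IsHermitian by simpa [Matrix.conjTranspose_eq_transpose_of_trivial] using Matrix.isHermitian_conjTranspose_mul_self A).eigenvalues i = (singVals A i)^2 := by
    rw [singVals, Real.sq_sqrt hnn]
  rw [h2]
  have : singVals A i ≤ s := le_ciSup (Set.Finite.bddAbove (Set.finite_range _)) i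
  exact pow_le_pow_left₀ (singVals_nonneg A i) this 2

lemma dot_self_eq_norm_sq {n : ℕ} (v : Fin n → ℝ) :
    v ⬝ᵥ v = ‖(WithLp.equiv 2 (Fin n → ℝ)).symm v‖^2 := by
  rw [← real_inner_self_eq_norm_sq, PiLp.inner_apply]
  simp [dotProduct, RCLike.inner_apply, sq]

lemma norm2_eq_norm {n : ℕ} (v : Fin n → ℝ) :
    norm2 v = ‖(WithLp.equiv 2 (Fin n → ℝ)).symm v‖ := by
  rw [norm2, EuclideanSpace.norm_eq]
  congr 1
  refine Finset.sum_congr rfl fun i _ => ?_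
  rw [Real.norm_eq_abs, sq_abs]
  rfl

lemma mvt_fac {σ : ℝ → ℝ} {α : ℝ} (hdiff : Differentiable ℝ σ)
    (hσ' : ∀ t : ℝ, deriv σ t ∈ Set.Icc α 1) (u v : ℝ) :
    ∃ k ∈ Set.Icc α 1, σ u - σ v = k * (u - v) := by
  rcases lt_trichotomy u v with h | h | h
  · obtain ⟨c, _, hc⟩ := exists_deriv_eq_slope σ h (hdiff.continuous.continuousOn)
      (fun x _ => hdiff x |>.differentiableWithinAt)
    refine ⟨deriv σ c, hσ' c, ?_⟩
    rw [eq_div_iff (by intro hh; linarith [sub_eq_zero.mp hh] : v - u ≠ 0)] at hc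
    nlinarith [hc]
  · exact ⟨α, ⟨le_refl α, le_trans (hσ' 0).1 (hσ' 0).2⟩, by rw [h]; ring⟩
  · obtain ⟨c, _, hc⟩ := exists_deriv_eq_slope σ h (hdiff.continuous.continuousOn)
      (fun x _ => hdiff x |>.differentiableWithinAt)
    refine ⟨deriv σ c, hσ' c, ?_⟩
    rw [eq_div_iff (by intro hh; linarith [sub_eq_zero.mp hh] : u - v ≠ 0)] at hc
    nlinarith [hc]

lemma pointwise_bound {d : ℕ} [Nonempty (Fin d)] (σ : ℝ → ℝ) (α : ℝ) (hα : 0 < α)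
    (hdiff : Differentiable ℝ σ) (hσ' : ∀ t : ℝ, deriv σ t ∈ Set.Icc α 1)
    (A Δ : Matrix (Fin d) (Fin d) ℝ) (b : Fin d → ℝ) (zt zbt : Fin d → ℝ)
    (δ M : ℝ)
    (hδub : ∀ D : Matrix (Fin d) (Fin d) ℝ, (∀ i, D i i ∈ Set.Icc α 1) →
      (∀ i j, i ≠ j → D i j = 0) → mu2 (D * (A + Δ)) ≤ δ)
    (hzt : ‖(WithLp.equiv 2 (Fin d → ℝ)).symm zt‖ ≤ M) :
    (inner ℝ ((WithLp.equiv 2 (Fin d → ℝ)).symm (zt - zbt))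
        ((WithLp.equiv 2 (Fin d → ℝ)).symm
          (fun i => σ (A.mulVec zt i + b i) - σ ((A + Δ).mulVec zbt i + b i))) : ℝ)
      ≤ δ * ‖(WithLp.equiv 2 (Fin d → ℝ)).symm (zt - zbt)‖^2
        + (M * (⨆ i, singVals Δ i)) * ‖(WithLp.equiv 2 (Fin d → ℝ)).symm (zt - zbt)‖ := by
  set s := ⨆ i, singVals Δ i with hsdef
  have hs0 : 0 ≤ s := le_trans (singVals_nonneg Δ (Classical.arbitrary _))
    (le_ciSup (Set.Finite.bddAbove (Set.finite_range _)) _)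
  have hM0 : 0 ≤ M := le_trans (norm_nonneg _) hzt
  choose k hk hkfac using fun i : Fin d =>
    mvt_fac hdiff hσ' (A.mulVec zt i + b i) ((A + Δ).mulVec zbt i + b i)
  set wf : Fin d → ℝ := zt - zbt with hwf
  have hdiffvec : ∀ i, (A.mulVec zt i + b i) - ((A + Δ).mulVec zbt i + b i)
      = ((A + Δ) *ᵥ wf) i - (Δ *ᵥ zt) i := by
    intro i
    simp only [hwf, Matrix.mulVec_sub, Matrix.add_mulVec, Pi.sub_apply, Pi.add_apply]
    ring
  have hw'eq : (fun i => σ (A.mulVec zt i + b i) - σ ((A + Δ).mulVec zbt i + b i))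
      = (Matrix.diagonal k * (A + Δ)) *ᵥ wf - (Matrix.diagonal k) *ᵥ (Δ *ᵥ zt) := by
    funext i
    rw [hkfac i]
    simp only [Pi.sub_apply, ← Matrix.mulVec_mulVec, Matrix.mulVec_diagonal]
    rw [← mul_sub, ← hdiffvec i]
  rw [inner_eq_dot]
  show wf ⬝ᵥ (fun i => σ (A.mulVec zt i + b i) - σ ((A + Δ).mulVec zbt i + b i)) ≤ _
  rw [hw'eq, dotProduct_sub]
  have h1 : wf ⬝ᵥ ((Matrix.diagonal k * (A + Δ)) *ᵥ wf) ≤ δ * (wf ⬝ᵥ wf) := by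
    refine le_trans (dot_mu2_le _ wf) (mul_le_mul_of_nonneg_right ?_ ?_)
    · exact hδub (Matrix.diagonal k) (fun i => by simpa using hk i)
        (fun i j hij => Matrix.diagonal_apply_ne k hij)
    · rw [dot_self_eq_norm_sq]; positivity
  have h2 : ‖(WithLp.equiv 2 (Fin d → ℝ)).symm ((Matrix.diagonal k) *ᵥ (Δ *ᵥ zt))‖ ≤ s * M := by
    have hsq : ((Matrix.diagonal k) *ᵥ (Δ *ᵥ zt)) ⬝ᵥ ((Matrix.diagonal k) *ᵥ (Δ *ᵥ zt))
        ≤ (s * M)^2 := by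
      have hd1 : ((Matrix.diagonal k) *ᵥ (Δ *ᵥ zt)) ⬝ᵥ ((Matrix.diagonal k) *ᵥ (Δ *ᵥ zt))
          ≤ (Δ *ᵥ zt) ⬝ᵥ (Δ *ᵥ zt) := by
        simp only [dotProduct, Matrix.mulVec_diagonal]
        refine Finset.sum_le_sum fun i _ => ?_
        have hki := hk i
        have hk2 : k i * k i ≤ 1 := by nlinarith [hki.1, hki.2, hα]
        nlinarith [mul_nonneg (sub_nonneg.mpr hk2) (mul_self_nonneg ((Δ *ᵥ zt) i))]
      refine le_trans hd1 (le_trans (dot_sing_le Δ zt) ?_)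
      rw [dot_self_eq_norm_sq, mul_pow]
      exact mul_le_mul_of_nonneg_left
        (by nlinarith [norm_nonneg ((WithLp.equiv 2 (Fin d → ℝ)).symm zt)]) (by positivity)
    have := Real.sqrt_le_sqrt hsq
    rwa [dot_self_eq_norm_sq, Real.sqrt_sq (norm_nonneg _), Real.sqrt_sq (by positivity)] at this
  have h3 : -(wf ⬝ᵥ ((Matrix.diagonal k) *ᵥ (Δ *ᵥ zt)))
      ≤ ‖(WithLp.equiv 2 (Fin d → ℝ)).symm wf‖ * (s * M) := by
    have hcs := abs_real_inner_le_norm ((WithLp.equiv 2 (Fin d → ℝ)).symm wf)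
      ((WithLp.equiv 2 (Fin d → ℝ)).symm ((Matrix.diagonal k) *ᵥ (Δ *ᵥ zt)))
    rw [inner_eq_dot] at hcs
    have hla : -(wf ⬝ᵥ ((Matrix.diagonal k) *ᵥ (Δ *ᵥ zt)))
        ≤ |wf ⬝ᵥ ((Matrix.diagonal k) *ᵥ (Δ *ᵥ zt))| := neg_le_abs _
    refine le_trans hla (le_trans hcs ?_)
    exact mul_le_mul_of_nonneg_left h2 (norm_nonneg _)
  have h4 : wf ⬝ᵥ wf = ‖(WithLp.equiv 2 (Fin d → ℝ)).symm wf‖^2 := dot_self_eq_norm_sq wf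
  rw [h4] at h1
  calc wf ⬝ᵥ ((Matrix.diagonal k * (A + Δ)) *ᵥ wf) - wf ⬝ᵥ ((Matrix.diagonal k) *ᵥ (Δ *ᵥ zt))
      ≤ δ * ‖(WithLp.equiv 2 (Fin d → ℝ)).symm wf‖^2
        + ‖(WithLp.equiv 2 (Fin d → ℝ)).symm wf‖ * (s * M) := by linarith
    _ = δ * ‖(WithLp.equiv 2 (Fin d → ℝ)).symm wf‖^2
        + (M * s) * ‖(WithLp.equiv 2 (Fin d → ℝ)).symm wf‖ := by ring

lemma gronwall_inner {E : Type*} [NormedAddCommGroup E] [InnerProductSpace ℝ E]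
    (w w' : ℝ → E) (K ε : ℝ) (hε : 0 ≤ ε)
    (hw : ∀ t ∈ Set.Icc (0:ℝ) 1, HasDerivWithinAt w (w' t) (Set.Icc 0 1) t)
    (h0 : w 0 = 0)
    (hb : ∀ t ∈ Set.Icc (0:ℝ) 1, (inner ℝ (w t) (w' t) : ℝ) ≤ K * ‖w t‖^2 + ε * ‖w t‖)
    {c : ℝ} (hc : 0 < c) :
    ‖w 1‖ ≤ gronwallBound c K (ε + |K| * c) 1 := by
  set g : ℝ → ℝ := fun t => Real.sqrt (‖w t‖^2 + c^2) with hgdef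
  have hpos : ∀ t, (0:ℝ) < ‖w t‖^2 + c^2 := fun t => by positivity
  have hg2 : ∀ t, (g t)^2 = ‖w t‖^2 + c^2 := fun t => by
    rw [hgdef]; exact Real.sq_sqrt (hpos t).le
  have hgpos : ∀ t, 0 < g t := fun t => Real.sqrt_pos.mpr (hpos t)
  have hwg : ∀ t, ‖w t‖ ≤ g t := fun t => by
    rw [hgdef]
    calc ‖w t‖ = Real.sqrt (‖w t‖^2) := (Real.sqrt_sq (norm_nonneg _)).symm
      _ ≤ Real.sqrt (‖w t‖^2 + c^2) := Real.sqrt_le_sqrt (by nlinarith [sq_nonneg c])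
  have hcg : ∀ t, c ≤ g t := fun t => by
    rw [hgdef]
    calc c = Real.sqrt (c^2) := (Real.sqrt_sq hc.le).symm
      _ ≤ Real.sqrt (‖w t‖^2 + c^2) := Real.sqrt_le_sqrt (by nlinarith [sq_nonneg ‖w t‖])
  set gd : ℝ → ℝ := fun t => (inner ℝ (w t) (w' t) : ℝ) / g t with hgddef
  have hwc : ContinuousOn w (Set.Icc 0 1) := fun t ht => (hw t ht).continuousWithinAt
  have hgc : ContinuousOn g (Set.Icc (0:ℝ) 1) := by
    rw [hgdef]
    exact Real.continuous_sqrt.comp_continuousOn (((hwc.norm.pow 2)).add continuousOn_const)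
  have hgd : ∀ t ∈ Set.Ico (0:ℝ) 1, HasDerivWithinAt g (gd t) (Set.Ici t) t := by
    intro t ht
    have hwt : HasDerivWithinAt w (w' t) (Set.Ici t) t :=
      (hw t ⟨ht.1, ht.2.le⟩).mono_of_mem_nhdsWithin (Icc_mem_nhdsGE_of_mem ht)
    have hF : HasDerivWithinAt (fun u => (inner ℝ (w u) (w u) : ℝ) + c^2)
        ((inner ℝ (w t) (w' t) : ℝ) + (inner ℝ (w' t) (w t) : ℝ)) (Set.Ici t) t :=
      ((hwt.inner ℝ hwt)).add_const _
    have heq : (fun u => (inner ℝ (w u) (w u) : ℝ) + c^2) = fun u => ‖w u‖^2 + c^2 :=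
      funext fun u => by rw [real_inner_self_eq_norm_sq]
    rw [heq] at hF
    have hcomp := (Real.hasDerivAt_sqrt (ne_of_gt (hpos t))).comp_hasDerivWithinAt t hF
    refine hcomp.congr_deriv (Eq.symm ?_)
    have hsg : Real.sqrt (‖w t‖^2 + c^2) = g t := rfl
    rw [hgddef, hsg]
    field_simp [ne_of_gt (hgpos t)]
    rw [real_inner_comm (w' t) (w t)]
    ring
  have hbound : ∀ t ∈ Set.Ico (0:ℝ) 1, gd t ≤ K * g t + (ε + |K| * c) := by
    intro t ht
    have hip := hb t ⟨ht.1, ht.2.le⟩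
    rw [hgddef, div_le_iff₀ (hgpos t)]
    have h2 := hg2 t
    have h3 := hwg t
    have h4 := hcg t
    have h5 : (0:ℝ) ≤ ‖w t‖ := norm_nonneg _
    have h6 : 0 ≤ K + |K| := by linarith [neg_abs_le K]
    have h7 : K * ‖w t‖^2 = K * (g t)^2 - K * c^2 := by rw [h2]; ring
    nlinarith [mul_nonneg (mul_nonneg (abs_nonneg K) hc.le) (sub_nonneg.mpr h4),
      mul_nonneg hε (sub_nonneg.mpr h3), mul_nonneg h6 (sq_nonneg c)]
  have hmain := le_gronwallBound_of_liminf_deriv_right_le (f := g) (f' := gd)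
    (δ := c) (K := K) (ε := ε + |K| * c) (a := 0) (b := 1) hgc
    (fun x hx r hr => ((hgd x hx).liminf_right_slope_le hr).mono fun z hz => by
      rwa [slope_def_field, div_eq_inv_mul] at hz)
    (by rw [hgdef]; simp only [h0]; simp [Real.sqrt_sq hc.le])
    hbound 1 ⟨zero_le_one, le_refl 1⟩
  rw [sub_zero] at hmain
  exact le_trans (hwg 1) hmain

theorem perturbed_flow_upper_bound {d : ℕ} (σ : ℝ → ℝ) (α : ℝ) (hα : 0 < α) (hα1 : α ≤ 1)
    (hdiff : Differentiable ℝ σ) (hσ' : ∀ t : ℝ, deriv σ t ∈ Set.Icc α 1)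
    (A Δ : Matrix (Fin d) (Fin d) ℝ) (b : Fin d → ℝ)
    (z zb : ℝ → Fin d → ℝ)
    (hz : ∀ t ∈ Set.Icc (0:ℝ) 1, ∀ i : Fin d,
      HasDerivWithinAt (fun s => z s i) (σ (A.mulVec (z t) i + b i)) (Set.Icc 0 1) t)
    (hzb : ∀ t ∈ Set.Icc (0:ℝ) 1, ∀ i : Fin d,
      HasDerivWithinAt (fun s => zb s i) (σ ((A + Δ).mulVec (zb t) i + b i)) (Set.Icc 0 1) t)
    (h0 : z 0 = zb 0)
    (δ M : ℝ) (hδne : δ ≠ 0)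
    (hδ : IsGreatest {c | ∃ D : Matrix (Fin d) (Fin d) ℝ,
      (∀ i, D i i ∈ Set.Icc α 1) ∧ (∀ i j, i ≠ j → D i j = 0) ∧ c = mu2 (D * (A + Δ))} δ)
    (hM : IsGreatest ((fun t => norm2 (z t)) '' Set.Icc (0:ℝ) 1) M) :
    norm2 (z 1 - zb 1) ≤ M * (⨆ i, singVals Δ i) * ((Real.exp δ - 1) / δ) := by
  -- d = 0 contradicts δ ≠ 0
  rcases Nat.eq_zero_or_pos d with hd | hd
  · exfalso
    apply hδne
    obtain ⟨D, _, _, hc⟩ := hδ.1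
    subst hd
    rw [hc, mu2, Real.iSup_of_isEmpty]
  haveI : Nonempty (Fin d) := Fin.pos_iff_nonempty.mp hd
  set s := ⨆ i, singVals Δ i with hsdef
  have hs0 : 0 ≤ s := le_trans (singVals_nonneg Δ (Classical.arbitrary _))
    (le_ciSup (Set.Finite.bddAbove (Set.finite_range _)) _)
  have hzM : ∀ t ∈ Set.Icc (0:ℝ) 1, ‖(WithLp.equiv 2 (Fin d → ℝ)).symm (z t)‖ ≤ M := by
    intro t ht
    have h := hM.2 ⟨t, ht, rfl⟩
    change norm2 (z t) ≤ M at h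
    rwa [norm2_eq_norm] at h
  have hM0 : 0 ≤ M := le_trans (norm_nonneg _) (hzM 0 ⟨le_refl 0, zero_le_one⟩)
  set ε := M * s with hεdef
  have hε : 0 ≤ ε := mul_nonneg hM0 hs0
  -- the difference function in EuclideanSpace
  set w : ℝ → EuclideanSpace ℝ (Fin d) :=
    fun t => (WithLp.equiv 2 (Fin d → ℝ)).symm (z t - zb t) with hwdef
  set w' : ℝ → EuclideanSpace ℝ (Fin d) := fun t => (WithLp.equiv 2 (Fin d → ℝ)).symm
    (fun i => σ (A.mulVec (z t) i + b i) - σ ((A + Δ).mulVec (zb t) i + b i)) with hw'def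
  have hwderiv : ∀ t ∈ Set.Icc (0:ℝ) 1, HasDerivWithinAt w (w' t) (Set.Icc 0 1) t := by
    intro t ht
    have h1 : HasDerivWithinAt (fun u => z u - zb u)
        (fun i => σ (A.mulVec (z t) i + b i) - σ ((A + Δ).mulVec (zb t) i + b i))
        (Set.Icc 0 1) t := by
      rw [hasDerivWithinAt_pi]
      intro i
      exact (hz t ht i).sub (hzb t ht i)
    exact ((PiLp.continuousLinearEquiv 2 ℝ
      (fun _ : Fin d => ℝ)).symm.toContinuousLinearMap.hasFDerivAt).comp_hasDerivWithinAt t h1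
  have hw0 : w 0 = 0 := by
    rw [hwdef]
    simp [h0]
  have hbnd : ∀ t ∈ Set.Icc (0:ℝ) 1, (inner ℝ (w t) (w' t) : ℝ) ≤ δ * ‖w t‖^2 + ε * ‖w t‖ := by
    intro t ht
    exact pointwise_bound σ α hα hdiff hσ' A Δ b (z t) (zb t) δ M
      (fun D hD1 hD2 => hδ.2 ⟨D, hD1, hD2, rfl⟩) (hzM t ht)
  have key : ∀ c : ℝ, 0 < c → ‖w 1‖ ≤ gronwallBound c δ (ε + |δ| * c) 1 :=
    fun c hc => gronwall_inner w w' δ ε hε hwderiv hw0 hbnd hc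
  -- expand the bound and take the limit c → 0
  set T := ε * ((Real.exp δ - 1) / δ) with hTdef
  set C := Real.exp δ + |δ| / δ * (Real.exp δ - 1) with hCdef
  have hkey2 : ∀ c : ℝ, 0 < c → ‖w 1‖ ≤ T + c * C := by
    intro c hc
    refine le_trans (key c hc) (le_of_eq ?_)
    rw [gronwallBound_of_K_ne_0 hδne, hTdef, hCdef]
    field_simp
    ring
  have hCpos : 0 < C := by
    rw [hCdef]
    rcases lt_or_gt_of_ne hδne with h | h
    · rw [abs_of_neg h]
      have : -δ / δ = -1 := by field_simp
      rw [this]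
      nlinarith [Real.exp_pos δ]
    · rw [abs_of_pos h]
      have h1 : δ / δ = 1 := by field_simp
      rw [h1]
      nlinarith [Real.exp_pos δ, Real.add_one_le_exp δ]
  have hfin : ‖w 1‖ ≤ T := by
    refine le_of_forall_pos_le_add fun η hη => ?_
    have := hkey2 (η / C) (div_pos hη hCpos)
    rwa [div_mul_cancel₀ _ (ne_of_gt hCpos)] at this
  have hn : norm2 (z 1 - zb 1) = ‖w 1‖ := by
    rw [norm2_eq_norm, hwdef]
  rw [hn, hTdef] at *
  calc ‖w 1‖ ≤ ε * ((Real.exp δ - 1) / δ) := hfin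
    _ = M * s * ((Real.exp δ - 1) / δ) := by rw [hεdef]
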